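/- Let H0 and W be bounded self-adjoint operators on a complex Hilbert space ℋ with W ≥ 0, and set λ(t) := inf spec(H0 + tW) for t ≥ 0. Let E_F ∈ ℝ, δ > 0 and t₀ > 0 be such that λ(t₀) ≥ E_F, and let I ⊂ ℝ be a compact interval with max I ≤ E_F − δ. Let P be an orthogonal projection commuting with H0 such that ⟨H0 g, g⟩ ≤ (max I)·‖g‖² for every g in the range of P. Then P W P ≥ (δ / t₀)·P. -/

import Mathlib

open ContinuousLinearMap

private lemma aux_smul_isSelfAdjoint {𝓗 : Type*} [NormedAddCommGroup 𝓗]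
    [InnerProductSpace ℂ 𝓗] [CompleteSpace 𝓗]
    (W : 𝓗 →L[ℂ] 𝓗) (hWsa : IsSelfAdjoint W) (t₀ : ℝ) : IsSelfAdjoint (t₀ • W) := by
  rw [isSelfAdjoint_iff_isSymmetric] at hWsa ⊢
  intro x y
  simp only [ContinuousLinearMap.coe_smul, LinearMap.smul_apply]
  rw [RCLike.real_smul_eq_coe_smul (K := ℂ), RCLike.real_smul_eq_coe_smul (K := ℂ),
    inner_smul_left, inner_smul_right, hWsa x y]
  simp [RCLike.conj_ofReal]

/-- Explicit-constant uncertainty principle near a fluctuation boundary.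
If `λ(t₀) = inf spec(H0 + t₀ W) ≥ E_F` for some `t₀ > 0`, `I = [a, b]` is a compact
interval with `b ≤ E_F − δ`, and `P` is an orthogonal projection commuting with `H0`
with `⟨H0 g, g⟩ ≤ b ‖g‖²` on its range, then `P W P ≥ (δ / t₀) P`. -/
theorem uncertainty_principle_explicit_constant
    {𝓗 : Type*} [NormedAddCommGroup 𝓗] [InnerProductSpace ℂ 𝓗] [CompleteSpace 𝓗]
    (H0 W P : 𝓗 →L[ℂ] 𝓗)
    (hH0 : IsSelfAdjoint H0) (hW : W.IsPositive)
    (hPidem : IsIdempotentElem P) (hPsa : IsSelfAdjoint P)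
    (hcomm : P * H0 = H0 * P)
    (lam : ℝ → ℝ) (hlam : ∀ t : ℝ, lam t = sInf (spectrum ℝ (H0 + t • W)))
    (E_F δ t₀ : ℝ) (hδ : 0 < δ) (ht₀ : 0 < t₀) (hfull : E_F ≤ lam t₀)
    (a b : ℝ) (hab : a ≤ b) (hb : b ≤ E_F - δ)
    (hPb : ∀ g ∈ Set.range P, ((inner ℂ (H0 g) g : ℂ)).re ≤ b * ‖g‖ ^ 2) :
    (P ∘L W ∘L P - (δ / t₀) • P).IsPositive := by
  set A : 𝓗 →L[ℂ] 𝓗 := H0 + t₀ • W with hA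
  have hWsa : IsSelfAdjoint W := hW.isSelfAdjoint
  have hAsa : IsSelfAdjoint A := hH0.add (aux_smul_isSelfAdjoint W hWsa t₀)
  -- every spectral point of A is ≥ E_F
  have hspec : ∀ x ∈ spectrum ℝ A, E_F ≤ x := by
    intro x hx
    have hbdd : BddBelow (spectrum ℝ A) := (spectrum.isCompact A).bddBelow
    have h1 := csInf_le hbdd hx
    have h2 : E_F ≤ sInf (spectrum ℝ A) := by rw [← hlam t₀]; exact hfull
    linarith
  -- A - E_F • 1 is nonnegative
  have hshift : (0 : 𝓗 →L[ℂ] 𝓗) ≤ A - algebraMap ℝ (𝓗 →L[ℂ] 𝓗) E_F := by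
    have hsa' : IsSelfAdjoint (A - algebraMap ℝ (𝓗 →L[ℂ] 𝓗) E_F) :=
      hAsa.sub (IsSelfAdjoint.algebraMap _ (star_trivial E_F))
    rw [StarOrderedRing.nonneg_iff_spectrum_nonneg (R := ℝ) _ hsa']
    intro x hx
    rw [← spectrum.sub_singleton_eq] at hx
    obtain ⟨y, hy, z, hz, rfl⟩ := hx
    rcases Set.mem_singleton_iff.mp hz with rfl
    have hzy := hspec y hy
    show (0 : ℝ) ≤ y - z
    linarith
  have hshiftpos : (A - algebraMap ℝ (𝓗 →L[ℂ] 𝓗) E_F).IsPositive :=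
    (ContinuousLinearMap.nonneg_iff_isPositive _).mp hshift
  have hAlow : ∀ g : 𝓗, E_F * ‖g‖ ^ 2 ≤ ((inner ℂ (A g) g : ℂ)).re := by
    intro g
    have h0 := hshiftpos.re_inner_nonneg_left g
    have hcalc : ((inner ℂ ((A - algebraMap ℝ (𝓗 →L[ℂ] 𝓗) E_F) g) g : ℂ)).re
        = ((inner ℂ (A g) g : ℂ)).re - E_F * ‖g‖ ^ 2 := by
      simp only [sub_apply, inner_sub_left, Complex.sub_re]
      congr 1
      rw [Algebra.algebraMap_eq_smul_one]
      simp only [smul_apply, one_apply]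
      rw [RCLike.real_smul_eq_coe_smul (K := ℂ), inner_smul_left]
      simp [inner_self_eq_norm_sq_to_K, RCLike.conj_ofReal, ← Complex.ofReal_pow]
    simp only [RCLike.re_to_complex] at h0
    rw [hcalc] at h0
    linarith
  have hPsymm : P.IsSymmetric := isSelfAdjoint_iff_isSymmetric.mp hPsa
  have hPWP : IsSelfAdjoint (P ∘L W ∘L P) := by
    have h := hWsa.adjoint_conj P
    rwa [← ContinuousLinearMap.star_eq_adjoint, hPsa.star_eq] at h
  refine ⟨isSelfAdjoint_iff_isSymmetric.mp (hPWP.sub (aux_smul_isSelfAdjoint P hPsa (δ / t₀))), ?_⟩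
  intro f
  have hPg : P (P f) = P f := by
    have h := DFunLike.congr_fun hPidem f
    rwa [ContinuousLinearMap.mul_apply] at h
  have hgr : P f ∈ Set.range P := ⟨f, rfl⟩
  -- lower bound for ⟪W (P f), P f⟫
  have hWlow : δ / t₀ * ‖P f‖ ^ 2 ≤ ((inner ℂ (W (P f)) (P f) : ℂ)).re := by
    have h1 := hAlow (P f)
    have hAg : ((inner ℂ (A (P f)) (P f) : ℂ)).re
        = ((inner ℂ (H0 (P f)) (P f) : ℂ)).re + t₀ * ((inner ℂ (W (P f)) (P f) : ℂ)).re := by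
      simp only [hA, add_apply, inner_add_left, Complex.add_re]
      congr 1
      simp only [smul_apply]
      rw [RCLike.real_smul_eq_coe_smul (K := ℂ), inner_smul_left]
      simp [RCLike.conj_ofReal]
    have h2 := hPb (P f) hgr
    rw [hAg] at h1
    rw [div_mul_eq_mul_div, div_le_iff₀ ht₀]
    nlinarith [sq_nonneg ‖P f‖]
  -- compute the quadratic form
  have hform : ((P ∘L W ∘L P - (δ / t₀) • P).reApplyInnerSelf f)
      = ((inner ℂ (W (P f)) (P f) : ℂ)).re - δ / t₀ * ‖P f‖ ^ 2 := by
    rw [ContinuousLinearMap.reApplyInnerSelf]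
    simp only [sub_apply, comp_apply, smul_apply, inner_sub_left, RCLike.re_to_complex,
      Complex.sub_re]
    congr 1
    · exact congrArg Complex.re (hPsymm (W (P f)) f)
    · rw [RCLike.real_smul_eq_coe_smul (K := ℂ), inner_smul_left]
      have h2 : (inner ℂ (P f) f : ℂ) = inner ℂ (P f) (P f) := by
        conv_lhs => rw [← hPg]
        exact hPsymm (P f) f
      rw [h2, inner_self_eq_norm_sq_to_K]
      simp [RCLike.conj_ofReal, ← Complex.ofReal_pow]
  rw [hform]
  linarith
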